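/- For every integer ℓ ≥ 1, the matrix B_{k,ℓ}(u) has the following form: its entry at position (3s−1, 3t−2) equals a_{k,(s,t),ℓ}(u) for all 1 ≤ s,t ≤ k, and all of its other entries coincide with the corresponding entries of B_k(u). -/

import Mathlib

/-!
The matrices `A_k(u), B_k(u), C_k(u), D_k(u)` (1-based indices in `{1,…,3k}`) arising from
the truncated type-1 transfer operator of `PGL(3,F_q[t])\B`, and the Schur-complement
recursion `B_{k,ℓ}(u) = B_k(u) − D_k(u)·B_{k,ℓ−1}(u)⁻¹·C_k(u)`.
-/

/-- Entry of `B_k(u)` at 1-based position `(i,j)`. -/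
def Bent {R : Type*} [CommRing R] (q : ℕ) (u : R) (i j : ℕ) : R :=
  if i = j then 1
  else if i = 2 ∧ j = 1 then -((q : R) ^ 2 - 1) * u
  else if i % 3 = 2 ∧ 5 ≤ i ∧ j + 1 = i then -((q : R) - 1) * u
  else if i % 3 = 0 ∧ 3 ≤ i ∧ j = i + 3 then -(q : R) ^ 2 * u
  else if i % 3 = 0 ∧ 3 ≤ i ∧ j + 1 = i then -((q : R) ^ 2 - (q : R)) * u
  else 0

/-- Entry of `A_k(u)` at 1-based position `(i,j)`. -/
def Aent {R : Type*} [CommRing R] (q : ℕ) (u : R) (i j : ℕ) : R :=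
  if i = 1 ∧ j = 3 then -(q : R) ^ 2 * u
  else if i % 3 = 1 ∧ 4 ≤ i ∧ j + 2 = i then -(q : R) * u
  else Bent q u i j

/-- Entry of `C_k(u)` at 1-based position `(i,j)`. -/
def Cent {R : Type*} [CommRing R] (q : ℕ) (u : R) (i j : ℕ) : R :=
  if i = j ∧ i % 3 = 1 then -u
  else if i % 3 = 0 ∧ 3 ≤ i ∧ j = i + 1 then -((q : R) ^ 2 - (q : R)) * u
  else 0

/-- Entry of `D_k(u)` at 1-based position `(i,j)`. -/
def Dent {R : Type*} [CommRing R] (q : ℕ) (u : R) (i j : ℕ) : R :=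
  if i % 3 = 2 ∧ 5 ≤ i ∧ j + 3 = i then -(q : R) * u
  else if i = 2 ∧ j = 3 then -(q : R) ^ 2 * u
  else 0

/-- The `3k × 3k` matrix `B_k(u)`. -/
def Bmat {R : Type*} [CommRing R] (q : ℕ) (u : R) (k : ℕ) :
    Matrix (Fin (3 * k)) (Fin (3 * k)) R := fun i j => Bent q u (i.val + 1) (j.val + 1)

/-- The `3k × 3k` matrix `A_k(u)`. -/
def Amat {R : Type*} [CommRing R] (q : ℕ) (u : R) (k : ℕ) :
    Matrix (Fin (3 * k)) (Fin (3 * k)) R := fun i j => Aent q u (i.val + 1) (j.val + 1)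

/-- The `3k × 3k` matrix `C_k(u)`. -/
def Cmat {R : Type*} [CommRing R] (q : ℕ) (u : R) (k : ℕ) :
    Matrix (Fin (3 * k)) (Fin (3 * k)) R := fun i j => Cent q u (i.val + 1) (j.val + 1)

/-- The `3k × 3k` matrix `D_k(u)`. -/
def Dmat {R : Type*} [CommRing R] (q : ℕ) (u : R) (k : ℕ) :
    Matrix (Fin (3 * k)) (Fin (3 * k)) R := fun i j => Dent q u (i.val + 1) (j.val + 1)

/-- `Brec q u k n = B_{k,n+1}(u)`:  `Brec 0 = B_k(u)` and
`Brec (n+1) = B_k(u) − D_k(u)·(Brec n)⁻¹·C_k(u)`. -/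
noncomputable def Brec {R : Type*} [CommRing R] (q : ℕ) (u : R) (k : ℕ) :
    ℕ → Matrix (Fin (3 * k)) (Fin (3 * k)) R
  | 0 => Bmat q u k
  | n + 1 => Bmat q u k - Dmat q u k * (Brec q u k n)⁻¹ * Cmat q u k

open Polynomial in
/-- `aP q k ℓ s t = a_{k,(s,t),ℓ}(u) ∈ ℚ[u]` (with the junk value `0` at `ℓ = 0`). -/
noncomputable def aP (q k : ℕ) : ℕ → ℕ → ℕ → ℚ[X]
  | 0, _, _ => 0
  | 1, s, t =>
      if s = 1 ∧ t = 1 then -C ((q : ℚ) ^ 2 - 1) * X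
      else if s = t then -C ((q : ℚ) - 1) * X
      else 0
  | ℓ + 2, s, t =>
      if s = 1 ∧ t = 1 then
        -C ((q : ℚ) ^ 2 - 1) * X +
          ∑ i ∈ Finset.Icc 1 k,
            C (((q : ℚ) - 1) * (q : ℚ) ^ (2 * i + 1)) * X ^ (i + 2) * aP q k (ℓ + 1) i 1
      else if s = 1 then
        -C (((q : ℚ) - 1) * (q : ℚ) ^ (2 * t - 1)) * X ^ t +
          ∑ i ∈ Finset.Icc 1 k,
            C (((q : ℚ) - 1) * (q : ℚ) ^ (2 * i + 1)) * X ^ (i + 2) * aP q k (ℓ + 1) i t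
      else if s = t then
        -C ((q : ℚ) - 1) * X + C (q : ℚ) * X ^ 2 * aP q k (ℓ + 1) (s - 1) t
      else C (q : ℚ) * X ^ 2 * aP q k (ℓ + 1) (s - 1) t

namespace BrecAux
open Finset

variable {R : Type*} [CommRing R]

lemma sum_range_three (f : ℕ → R) (k : ℕ) :
    ∑ p ∈ range (3 * k), f p
      = ∑ t ∈ range k, (f (3*t) + f (3*t+1) + f (3*t+2)) := by
  induction k with
  | zero => simp
  | succ k ih =>
      rw [Finset.sum_range_succ, ← ih, show 3*(k+1) = 3*k+1+1+1 by ring,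
        Finset.sum_range_succ, Finset.sum_range_succ, Finset.sum_range_succ]
      ring

def Nent (q : ℕ) (u : R) (k : ℕ) (a : ℕ → ℕ → R) (i j : ℕ) : R :=
  if i % 3 = 1 then (if i = j then 1 else 0)
  else if i % 3 = 2 then
    (if i = j then 1 else if j % 3 = 1 then -a ((i+1)/3) ((j+2)/3) else 0)
  else
    if j % 3 = 0 then (if i ≤ j then ((q:R)^2*u)^(j/3 - i/3) else 0)
    else if j % 3 = 2 then
      (if i ≤ j + 1 then ((q:R)^2-(q:R))*u*((q:R)^2*u)^((j+1)/3 - i/3) else 0)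
    else -∑ n ∈ Finset.Icc (i/3) k,
        ((q:R)^2*u)^(n - i/3) * (((q:R)^2-(q:R))*u) * a n ((j+2)/3)

def Ment (q : ℕ) (u : R) (a : ℕ → ℕ → R) (i j : ℕ) : R :=
  if i % 3 = 2 ∧ j % 3 = 1 then a ((i+1)/3) ((j+2)/3) else Bent q u i j

variable (q : ℕ) (u : R) (k : ℕ) (a : ℕ → ℕ → R)

lemma Ment_row1 {i : ℕ} (h : i % 3 = 1) (x : ℕ) :
    Ment q u a i x = if i = x then 1 else 0 := by
  unfold Ment Bent; split_ifs <;> first | rfl | omega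

lemma Ment_row2 {i : ℕ} (h : i % 3 = 2) (x : ℕ) :
    Ment q u a i x
      = if x % 3 = 1 then a ((i+1)/3) ((x+2)/3) else if i = x then 1 else 0 := by
  unfold Ment Bent; split_ifs <;> first | rfl | omega

lemma Ment_row0 {i : ℕ} (h : i % 3 = 0) (h3 : 1 ≤ i) (x : ℕ) :
    Ment q u a i x
      = if x + 1 = i then -((q:R)^2-(q:R))*u
        else if x = i + 3 then -(q:R)^2*u
        else if x = i then 1 else 0 := by
  unfold Ment Bent; split_ifs <;> first | rfl | omega

lemma Nent_row1 {i : ℕ} (h : i % 3 = 1) (j : ℕ) :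
    Nent q u k a i j = if i = j then 1 else 0 := by
  unfold Nent; rw [if_pos h]

lemma Nent_row2 {i : ℕ} (h : i % 3 = 2) (j : ℕ) :
    Nent q u k a i j
      = if i = j then 1 else if j % 3 = 1 then -a ((i+1)/3) ((j+2)/3) else 0 := by
  unfold Nent; rw [if_neg (by omega), if_pos h]

lemma Nent_row0_j0 {i j : ℕ} (hi : i % 3 = 0) (hj : j % 3 = 0) :
    Nent q u k a i j = if i ≤ j then ((q:R)^2*u)^(j/3 - i/3) else 0 := by
  unfold Nent; rw [if_neg (by omega), if_neg (by omega), if_pos hj]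

lemma Nent_row0_j2 {i j : ℕ} (hi : i % 3 = 0) (hj : j % 3 = 2) :
    Nent q u k a i j
      = if i ≤ j + 1 then ((q:R)^2-(q:R))*u*((q:R)^2*u)^((j+1)/3 - i/3) else 0 := by
  unfold Nent; rw [if_neg (by omega), if_neg (by omega), if_neg (by omega), if_pos hj]

lemma Nent_row0_j1 {i j : ℕ} (hi : i % 3 = 0) (hj : j % 3 = 1) :
    Nent q u k a i j
      = -∑ n ∈ Finset.Icc (i/3) k,
          ((q:R)^2*u)^(n - i/3) * (((q:R)^2-(q:R))*u) * a n ((j+2)/3) := by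
  unfold Nent; rw [if_neg (by omega), if_neg (by omega), if_neg (by omega), if_neg (by omega)]

lemma MN {i j : ℕ} (hi1 : 1 ≤ i) (hi2 : i ≤ 3*k) (hj1 : 1 ≤ j) (hj2 : j ≤ 3*k) :
    ∑ p ∈ range (3*k), Ment q u a i (p+1) * Nent q u k a (p+1) j
      = if i = j then 1 else 0 := by
  rw [sum_range_three]
  simp only [show ∀ t : ℕ, 3*t+1+1 = 3*t+2 from fun t => by omega,
    show ∀ t : ℕ, 3*t+2+1 = 3*t+3 from fun t => by omega]
  rcases (show i % 3 = 1 ∨ i % 3 = 2 ∨ i % 3 = 0 by omega) with h | h | h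
  · -- row of type X
    obtain ⟨m, hmk, rfl⟩ : ∃ m, m < k ∧ i = 3*m+1 := ⟨i/3, by omega, by omega⟩
    rw [Finset.sum_eq_single_of_mem m (by simp [hmk])]
    · rw [Ment_row1 q u a (show (3*m+1)%3 = 1 by omega),
        Ment_row1 q u a (show (3*m+1)%3 = 1 by omega),
        Ment_row1 q u a (show (3*m+1)%3 = 1 by omega),
        Nent_row1 q u k a (show (3*m+1)%3 = 1 by omega)]
      split_ifs <;> first | ring1 | omega | (exfalso; omega)
    · intro b _ hb
      rw [Ment_row1 q u a (show (3*m+1)%3 = 1 by omega),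
        Ment_row1 q u a (show (3*m+1)%3 = 1 by omega),
        Ment_row1 q u a (show (3*m+1)%3 = 1 by omega)]
      split_ifs <;> first | ring1 | omega | (exfalso; omega)
  · -- row of type Y
    obtain ⟨m, hmk, rfl⟩ : ∃ m, m < k ∧ i = 3*m+2 := ⟨i/3, by omega, by omega⟩
    have key : ∀ t ∈ range k,
        Ment q u a (3*m+2) (3*t+1) * Nent q u k a (3*t+1) j
          + Ment q u a (3*m+2) (3*t+2) * Nent q u k a (3*t+2) j
          + Ment q u a (3*m+2) (3*t+3) * Nent q u k a (3*t+3) j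
        = (a (m+1) (t+1) * (if 3*t+1 = j then 1 else 0))
          + (if t = m then Nent q u k a (3*m+2) j else 0) := by
      intro t _
      rw [Ment_row2 q u a (show (3*m+2)%3 = 2 by omega) (3*t+1),
        Ment_row2 q u a (show (3*m+2)%3 = 2 by omega) (3*t+2),
        Ment_row2 q u a (show (3*m+2)%3 = 2 by omega) (3*t+3),
        Nent_row1 q u k a (show (3*t+1)%3 = 1 by omega) j,
        if_pos (show (3*t+1)%3 = 1 by omega),
        if_neg (show ¬((3*t+2)%3 = 1) by omega),
        if_neg (show ¬((3*t+3)%3 = 1) by omega),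
        if_neg (show ¬(3*m+2 = 3*t+3) by omega),
        show (3*m+2+1)/3 = m+1 by omega, show (3*t+1+2)/3 = t+1 by omega]
      by_cases htm : t = m
      · subst htm
        rw [if_pos rfl, if_pos rfl]; ring
      · rw [if_neg (show ¬(3*m+2 = 3*t+2) by omega), if_neg htm]; ring
    rw [Finset.sum_congr rfl key, Finset.sum_add_distrib,
      Finset.sum_ite_eq' (range k) m fun _ => Nent q u k a (3*m+2) j,
      if_pos (by simp [hmk]), Nent_row2 q u k a (show (3*m+2)%3 = 2 by omega) j,
      show (3*m+2+1)/3 = m+1 by omega]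
    by_cases hj : j % 3 = 1
    · obtain ⟨t₀, ht₀k, rfl⟩ : ∃ t₀, t₀ < k ∧ j = 3*t₀+1 := ⟨j/3, by omega, by omega⟩
      rw [Finset.sum_eq_single_of_mem t₀ (by simp [ht₀k])]
      · rw [if_pos rfl, if_neg (show ¬(3*m+2 = 3*t₀+1) by omega),
          if_pos (show (3*t₀+1)%3 = 1 by omega), show (3*t₀+1+2)/3 = t₀+1 by omega,
          if_neg (show ¬(3*m+2 = 3*t₀+1) by omega)]
        ring
      · intro b _ hb; rw [if_neg (by omega)]; ring
    · rw [Finset.sum_eq_zero (fun b _ => by rw [if_neg (by omega)]; ring), if_neg hj]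
      split_ifs <;> first | ring1 | omega | (exfalso; omega)
  · -- row of type Z
    obtain ⟨m, hm1, hmk, rfl⟩ : ∃ m, 1 ≤ m ∧ m ≤ k ∧ i = 3*m :=
      ⟨i/3, by omega, by omega, by omega⟩
    have key : ∀ t ∈ range k,
        Ment q u a (3*m) (3*t+1) * Nent q u k a (3*t+1) j
          + Ment q u a (3*m) (3*t+2) * Nent q u k a (3*t+2) j
          + Ment q u a (3*m) (3*t+3) * Nent q u k a (3*t+3) j
        = (if t+1 = m then
            (-((q:R)^2-(q:R))*u) * Nent q u k a (3*m-1) j + Nent q u k a (3*m) j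
           else 0)
          + (if t = m then (-(q:R)^2*u) * Nent q u k a (3*m+3) j else 0) := by
      intro t _
      rw [Ment_row0 q u a (show (3*m)%3 = 0 by omega) (by omega) (3*t+1),
        Ment_row0 q u a (show (3*m)%3 = 0 by omega) (by omega) (3*t+2),
        Ment_row0 q u a (show (3*m)%3 = 0 by omega) (by omega) (3*t+3),
        if_neg (show ¬(3*t+1+1 = 3*m) by omega),
        if_neg (show ¬(3*t+1 = 3*m+3) by omega),
        if_neg (show ¬(3*t+1 = 3*m) by omega),
        if_neg (show ¬(3*t+3+1 = 3*m) by omega),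
        if_neg (show ¬(3*t+2 = 3*m+3) by omega),
        if_neg (show ¬(3*t+2 = 3*m) by omega)]
      by_cases h1 : t+1 = m
      · subst h1
        rw [if_pos (show 3*t+2+1 = 3*(t+1) by omega), if_pos rfl,
          if_neg (show ¬(3*t+3 = 3*(t+1)+3) by omega),
          if_pos (show 3*t+3 = 3*(t+1) by omega),
          if_neg (show ¬(t = t+1) by omega),
          show 3*(t+1)-1 = 3*t+2 by omega, show 3*(t+1) = 3*t+3 by omega]
        ring
      · rw [if_neg (show ¬(3*t+2+1 = 3*m) by omega), if_neg h1]
        by_cases h2 : t = m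
        · subst h2
          rw [if_pos (show 3*t+3 = 3*t+3 from rfl), if_pos rfl,
            show 3*t+3 = 3*t+3 from rfl]
          ring
        · rw [if_neg (show ¬(3*t+3 = 3*m+3) by omega),
            if_neg (show ¬(3*t+3 = 3*m) by omega), if_neg h2]
          ring
    rw [Finset.sum_congr rfl key, Finset.sum_add_distrib,
      Finset.sum_ite_eq' (range k) m fun _ => (-(q:R)^2*u) * Nent q u k a (3*m+3) j]
    have hsingle : (∑ t ∈ range k, if t+1 = m then
        (-((q:R)^2-(q:R))*u) * Nent q u k a (3*m-1) j + Nent q u k a (3*m) j else 0)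
        = (-((q:R)^2-(q:R))*u) * Nent q u k a (3*m-1) j + Nent q u k a (3*m) j := by
      rw [Finset.sum_eq_single_of_mem (m-1) (by simp only [Finset.mem_range]; omega)]
      · rw [if_pos (by omega)]
      · intro b _ hb; rw [if_neg (by omega)]
    rw [hsingle]
    rcases (show j % 3 = 1 ∨ j % 3 = 2 ∨ j % 3 = 0 by omega) with hj | hj | hj
    · -- j ≡ 1 (mod 3)
      rw [Nent_row2 q u k a (show (3*m-1)%3 = 2 by omega) j,
        if_neg (show ¬(3*m-1 = j) by omega), if_pos hj,
        Nent_row0_j1 q u k a (show (3*m)%3 = 0 by omega) hj,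
        Nent_row0_j1 q u k a (show (3*m+3)%3 = 0 by omega) hj,
        if_neg (show ¬(3*m = j) by omega),
        show (3*m-1+1)/3 = m by omega, show (3*m)/3 = m by omega,
        show (3*m+3)/3 = m+1 by omega,
        ← Finset.insert_Icc_add_one_left_eq_Icc hmk, Finset.sum_insert (by simp),
        Nat.sub_self, pow_zero]
      by_cases hmk' : m < k
      · rw [if_pos (Finset.mem_range.2 hmk')]
        have hs : (∑ n ∈ Finset.Icc (m+1) k,
              ((q:R)^2*u)^(n - m) * (((q:R)^2-(q:R))*u) * a n ((j+2)/3))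
            = ((q:R)^2*u) * ∑ n ∈ Finset.Icc (m+1) k,
              ((q:R)^2*u)^(n - (m+1)) * (((q:R)^2-(q:R))*u) * a n ((j+2)/3) := by
          rw [Finset.mul_sum]
          refine Finset.sum_congr rfl fun n hn => ?_
          simp only [Finset.mem_Icc] at hn
          rw [show n - m = (n - (m+1)) + 1 by omega, pow_succ]
          ring
        rw [hs]; ring
      · rw [if_neg (by simp only [Finset.mem_range]; omega),
          Finset.Icc_eq_empty (by omega), Finset.sum_empty]
        ring
    · -- j ≡ 2 (mod 3)
      rw [Nent_row2 q u k a (show (3*m-1)%3 = 2 by omega) j,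
        if_neg (show ¬(j % 3 = 1) by omega),
        Nent_row0_j2 q u k a (show (3*m)%3 = 0 by omega) hj,
        Nent_row0_j2 q u k a (show (3*m+3)%3 = 0 by omega) hj,
        show (3*m)/3 = m by omega, show (3*m+3)/3 = m+1 by omega]
      simp only [Finset.mem_range]
      by_cases h1 : 3*m-1 = j
      · rw [show (j+1)/3 - m = 0 by omega, pow_zero]
        split_ifs <;> first | ring1 | omega | (exfalso; omega)
      · by_cases h2 : 3*m ≤ j+1
        · rw [show (j+1)/3 - m = ((j+1)/3 - (m+1)) + 1 by omega, pow_succ]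
          split_ifs <;> first | ring1 | omega | (exfalso; omega)
        · split_ifs <;> first | ring1 | omega | (exfalso; omega)
    · -- j ≡ 0 (mod 3)
      rw [Nent_row2 q u k a (show (3*m-1)%3 = 2 by omega) j,
        if_neg (show ¬(3*m-1 = j) by omega), if_neg (show ¬(j % 3 = 1) by omega),
        Nent_row0_j0 q u k a (show (3*m)%3 = 0 by omega) hj,
        Nent_row0_j0 q u k a (show (3*m+3)%3 = 0 by omega) hj,
        show (3*m)/3 = m by omega, show (3*m+3)/3 = m+1 by omega]
      simp only [Finset.mem_range]
      by_cases h1 : 3*m = j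
      · rw [show j/3 - m = 0 by omega, pow_zero]
        split_ifs <;> first | ring1 | omega | (exfalso; omega)
      · by_cases h2 : 3*m ≤ j
        · rw [show j/3 - m = (j/3 - (m+1)) + 1 by omega, pow_succ]
          split_ifs <;> first | ring1 | omega | (exfalso; omega)
        · split_ifs <;> first | ring1 | omega | (exfalso; omega)


def DNent (q : ℕ) (u : R) (k : ℕ) (a : ℕ → ℕ → R) (i r : ℕ) : R :=
  if i % 3 = 2 ∧ 5 ≤ i then (-(q:R)*u) * Nent q u k a (i-3) r
  else if i = 2 then (-(q:R)^2*u) * Nent q u k a 3 r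
  else 0

lemma DNsum (hk : 1 ≤ k) {i : ℕ} (hi1 : 1 ≤ i) (hi2 : i ≤ 3*k) (r : ℕ) :
    ∑ p ∈ range (3*k), Dent q u i (p+1) * Nent q u k a (p+1) r
      = DNent q u k a i r := by
  unfold DNent
  by_cases h1 : i % 3 = 2 ∧ 5 ≤ i
  · rw [if_pos h1,
      Finset.sum_eq_single_of_mem (i-4) (by simp only [Finset.mem_range]; omega)]
    · rw [show i-4+1 = i-3 by omega]
      unfold Dent
      rw [if_pos ⟨h1.1, h1.2, by omega⟩]
    · intro b _ hb
      unfold Dent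
      split_ifs <;> first | ring1 | (exfalso; omega)
  · by_cases h2 : i = 2
    · rw [if_neg h1, if_pos h2,
        Finset.sum_eq_single_of_mem 2 (by simp only [Finset.mem_range]; omega)]
      · subst h2
        unfold Dent
        rw [if_neg (by omega), if_pos (by omega)]
      · intro b _ hb
        unfold Dent
        split_ifs <;> first | ring1 | (exfalso; omega)
    · rw [if_neg h1, if_neg h2, Finset.sum_eq_zero]
      intro b _
      unfold Dent
      split_ifs <;> first | ring1 | (exfalso; omega)

lemma Ccol {j r : ℕ} (hj : j % 3 = 1) :
    Cent q u r j = (if r = j then -u else 0)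
      + (if 4 ≤ j ∧ r + 1 = j then -((q:R)^2-(q:R))*u else 0) := by
  unfold Cent
  split_ifs <;> first | ring1 | (exfalso; omega)

lemma DNCsum {j : ℕ} (hj1 : 1 ≤ j) (hj2 : j ≤ 3*k) (i : ℕ) :
    ∑ r ∈ range (3*k), DNent q u k a i (r+1) * Cent q u (r+1) j
      = if j % 3 = 1 then
          DNent q u k a i j * (-u)
            + (if 4 ≤ j then DNent q u k a i (j-1) * (-((q:R)^2-(q:R))*u) else 0)
        else 0 := by
  by_cases hj : j % 3 = 1
  · rw [if_pos hj]
    have hcc : ∀ r ∈ range (3*k), DNent q u k a i (r+1) * Cent q u (r+1) j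
        = DNent q u k a i (r+1) * (if r+1 = j then -u else 0)
          + DNent q u k a i (r+1) * (if 4 ≤ j ∧ r+1+1 = j then -((q:R)^2-(q:R))*u else 0) := by
      intro r _
      rw [Ccol q u hj]
      ring
    rw [Finset.sum_congr rfl hcc, Finset.sum_add_distrib]
    congr 1
    · rw [Finset.sum_eq_single_of_mem (j-1) (by simp only [Finset.mem_range]; omega)]
      · rw [show j-1+1 = j by omega, if_pos rfl]
      · intro b _ hb; rw [if_neg (by omega)]; ring
    · by_cases h4 : 4 ≤ j
      · rw [if_pos h4,
          Finset.sum_eq_single_of_mem (j-2) (by simp only [Finset.mem_range]; omega)]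
        · rw [show j-2+1 = j-1 by omega, if_pos ⟨h4, by omega⟩]
        · intro b _ hb; rw [if_neg (by omega)]; ring
      · rw [if_neg h4, Finset.sum_eq_zero]
        intro b _; rw [if_neg (by omega)]; ring
  · rw [if_neg hj, Finset.sum_eq_zero]
    intro b _
    have hc : Cent q u (b+1) j = 0 := by
      unfold Cent; split_ifs <;> first | rfl | (exfalso; omega)
    rw [hc, mul_zero]

end BrecAux

namespace BrecAux

noncomputable def aR (q k ℓ s t : ℕ) : RatFunc ℚ :=
  algebraMap (Polynomial ℚ) (RatFunc ℚ) (aP q k ℓ s t)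

lemma aR_one (q k s t : ℕ) :
    aR q k 1 s t = if s = 1 ∧ t = 1 then -((q:RatFunc ℚ)^2-1)*RatFunc.X
      else if s = t then -((q:RatFunc ℚ)-1)*RatFunc.X else 0 := by
  unfold aR
  simp only [aP]
  split_ifs <;>
    simp [map_mul, map_sub, map_pow, map_one, map_neg, map_natCast,
      RatFunc.algebraMap_C, RatFunc.algebraMap_X]

lemma hterm (q k n t' : ℕ) : (algebraMap (Polynomial ℚ) (RatFunc ℚ))
      (∑ i ∈ Finset.Icc 1 k,
        Polynomial.C (((q : ℚ) - 1) * (q : ℚ) ^ (2 * i + 1)) * Polynomial.X ^ (i + 2)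
          * aP q k (n + 1) i t')
      = ∑ i ∈ Finset.Icc 1 k,
          ((q:RatFunc ℚ)-1)*(q:RatFunc ℚ)^(2*i+1)*RatFunc.X^(i+2)
            * aR q k (n+1) i t' := by
  rw [map_sum]
  refine Finset.sum_congr rfl fun i _ => ?_
  unfold aR
  rw [map_mul, map_mul, map_pow, RatFunc.algebraMap_C, RatFunc.algebraMap_X,
    map_mul, map_sub, map_one, map_natCast, map_pow, map_natCast]

lemma aR_succ_one (q k n t : ℕ) :
    aR q k (n+2) 1 t
      = (if t = 1 then -((q:RatFunc ℚ)^2-1)*RatFunc.X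
         else -((q:RatFunc ℚ)-1)*(q:RatFunc ℚ)^(2*t-1)*RatFunc.X^t)
        + ∑ i ∈ Finset.Icc 1 k,
            ((q:RatFunc ℚ)-1)*(q:RatFunc ℚ)^(2*i+1)*RatFunc.X^(i+2) * aR q k (n+1) i t := by
  have hP : aP q k (n+2) 1 t
      = (if t = 1 then -Polynomial.C ((q:ℚ)^2-1)*Polynomial.X
         else -Polynomial.C (((q:ℚ)-1)*(q:ℚ)^(2*t-1))*Polynomial.X^t)
        + ∑ i ∈ Finset.Icc 1 k,
            Polynomial.C (((q:ℚ)-1)*(q:ℚ)^(2*i+1))*Polynomial.X^(i+2) * aP q k (n+1) i t := by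
    by_cases h1 : t = 1
    · subst h1; simp [aP]
    · simp [aP, h1]
  unfold aR
  rw [hP, map_add, hterm]
  congr 1
  by_cases h1 : t = 1
  · subst h1
    rw [if_pos rfl, if_pos rfl, map_mul, map_neg, RatFunc.algebraMap_C, RatFunc.algebraMap_X,
      map_sub, map_pow, map_natCast, map_one]
  · rw [if_neg h1, if_neg h1, map_mul, map_neg, map_pow, RatFunc.algebraMap_C,
      RatFunc.algebraMap_X, map_mul, map_sub, map_one, map_natCast, map_pow, map_natCast]
    ring

lemma aR_succ_ge2 (q k n s t : ℕ) (hs : 2 ≤ s) :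
    aR q k (n+2) s t
      = (if s = t then -((q:RatFunc ℚ)-1)*RatFunc.X else 0)
        + (q:RatFunc ℚ)*RatFunc.X^2 * aR q k (n+1) (s-1) t := by
  have hP : aP q k (n+2) s t
      = (if s = t then -Polynomial.C ((q:ℚ)-1)*Polynomial.X else 0)
        + Polynomial.C (q:ℚ) * Polynomial.X^2 * aP q k (n+1) (s-1) t := by
    by_cases hst : s = t
    · subst hst
      simp [aP, show ¬(s = 1 ∧ s = 1) by omega, show ¬s = 1 by omega]
    · simp [aP, hst, show ¬(s = 1 ∧ t = 1) by omega, show ¬s = 1 by omega]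
  unfold aR
  rw [hP, map_add, map_mul, map_mul, RatFunc.algebraMap_C, map_pow, RatFunc.algebraMap_X,
    map_natCast]
  congr 1
  by_cases hst : s = t
  · rw [if_pos hst, if_pos hst, map_mul, map_neg, RatFunc.algebraMap_C, RatFunc.algebraMap_X,
      map_sub, map_one, map_natCast]
  · rw [if_neg hst, if_neg hst, map_zero]

lemma hsum (q k n tt : ℕ) :
    ∑ i' ∈ Finset.Icc 1 k,
        ((q:RatFunc ℚ)-1)*(q:RatFunc ℚ)^(2*i'+1)*RatFunc.X^(i'+2) * aR q k (n+1) i' tt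
      = (q:RatFunc ℚ)^2*RatFunc.X*RatFunc.X * ∑ i' ∈ Finset.Icc 1 k,
          ((q:RatFunc ℚ)^2*RatFunc.X)^(i'-1) * (((q:RatFunc ℚ)^2-(q:RatFunc ℚ))*RatFunc.X)
            * aR q k (n+1) i' tt := by
  rw [Finset.mul_sum]
  refine Finset.sum_congr rfl fun i' hi' => ?_
  simp only [Finset.mem_Icc] at hi'
  obtain ⟨d, rfl⟩ : ∃ d, i' = d+1 := ⟨i'-1, by omega⟩
  rw [show d+1-1 = d by omega, show 2*(d+1)+1 = 2*d+3 by ring, show d+1+2 = d+3 by ring]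
  ring

lemma Bent_eq_Ment_one (q k : ℕ) {i j : ℕ} (hi1 : 1 ≤ i) (hi2 : i ≤ 3*k)
    (hj1 : 1 ≤ j) (hj2 : j ≤ 3*k) :
    Bent q (RatFunc.X : RatFunc ℚ) i j = Ment q RatFunc.X (aR q k 1) i j := by
  unfold Ment
  by_cases hij : i % 3 = 2 ∧ j % 3 = 1
  · rw [if_pos hij, aR_one]
    unfold Bent
    split_ifs <;> first | rfl | (exfalso; omega)
  · rw [if_neg hij]

end BrecAux

namespace BrecAux

lemma step_entry (q k n : ℕ) {i j : ℕ}
    (hi1 : 1 ≤ i) (hi2 : i ≤ 3*k) (hj1 : 1 ≤ j) (hj2 : j ≤ 3*k) :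
    Bent q (RatFunc.X : RatFunc ℚ) i j
      - (if j % 3 = 1 then
          DNent q RatFunc.X k (aR q k (n+1)) i j * (-RatFunc.X)
            + (if 4 ≤ j then DNent q RatFunc.X k (aR q k (n+1)) i (j-1)
                * (-((q:RatFunc ℚ)^2-(q:RatFunc ℚ))*RatFunc.X) else 0)
         else 0)
      = Ment q RatFunc.X (aR q k (n+2)) i j := by
  set u : RatFunc ℚ := RatFunc.X with hu
  by_cases hij : i % 3 = 2 ∧ j % 3 = 1
  · obtain ⟨hi', hj'⟩ := hij
    obtain ⟨t', ht'k, rfl⟩ : ∃ t', t' < k ∧ j = 3*t'+1 := ⟨j/3, by omega, by omega⟩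
    have hMent : Ment q u (aR q k (n+2)) i (3*t'+1)
        = aR q k (n+2) ((i+1)/3) ((3*t'+1+2)/3) := by
      unfold Ment; rw [if_pos ⟨hi', hj'⟩]
    rw [hMent, show (3*t'+1+2)/3 = t'+1 by omega, if_pos hj']
    by_cases hs0 : i = 2
    · subst hs0
      rw [show (2+1)/3 = 1 by norm_num]
      have hD : ∀ x, DNent q u k (aR q k (n+1)) 2 x
          = (-(q:RatFunc ℚ)^2*u) * Nent q u k (aR q k (n+1)) 3 x := by
        intro x; unfold DNent; rw [if_neg (by omega), if_pos rfl]
      rw [hD, Nent_row0_j1 q u k (aR q k (n+1)) (show (3:ℕ)%3 = 0 by norm_num) hj',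
        show (3:ℕ)/3 = 1 by norm_num, show (3*t'+1+2)/3 = t'+1 by omega,
        aR_succ_one, hsum]
      by_cases ht0 : t' = 0
      · subst ht0
        rw [if_neg (show ¬(4 ≤ 3*0+1) by norm_num), if_pos rfl]
        have hB : Bent q u 2 (3*0+1) = -((q:RatFunc ℚ)^2-1)*u := by
          unfold Bent
          rw [if_neg (by omega), if_pos ⟨rfl, by norm_num⟩]
        rw [hB]
        ring
      · rw [if_pos (show 4 ≤ 3*t'+1 by omega), hD,
          show 3*t'+1-1 = 3*t' by omega,
          Nent_row0_j0 q u k (aR q k (n+1)) (show (3:ℕ)%3 = 0 by norm_num)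
            (show (3*t')%3 = 0 by omega),
          if_pos (show (3:ℕ) ≤ 3*t' by omega),
          show (3*t')/3 = t' by omega, show (3:ℕ)/3 = 1 by norm_num,
          if_neg (show ¬(t'+1 = 1) by omega)]
        have hB : Bent q u 2 (3*t'+1) = 0 := by
          unfold Bent
          split_ifs <;> first | rfl | (exfalso; omega)
        rw [hB]
        obtain ⟨e, rfl⟩ : ∃ e, t' = e+1 := ⟨t'-1, by omega⟩
        rw [show e+1-1 = e by omega, show 2*(e+1+1)-1 = 2*e+3 by omega,
          show e+1+1 = e+2 by omega]
        ring
    · obtain ⟨s', hs'1, hs'k, rfl⟩ : ∃ s', 1 ≤ s' ∧ s' < k ∧ i = 3*s'+2 :=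
        ⟨i/3, by omega, by omega, by omega⟩
      rw [show (3*s'+2+1)/3 = s'+1 by omega]
      have hD : ∀ x, DNent q u k (aR q k (n+1)) (3*s'+2) x
          = (-(q:RatFunc ℚ)*u) * Nent q u k (aR q k (n+1)) (3*(s'-1)+2) x := by
        intro x; unfold DNent
        rw [if_pos ⟨by omega, by omega⟩, show 3*s'+2-3 = 3*(s'-1)+2 by omega]
      rw [hD, Nent_row2 q u k (aR q k (n+1)) (show (3*(s'-1)+2)%3 = 2 by omega),
        if_neg (show ¬(3*(s'-1)+2 = 3*t'+1) by omega), if_pos hj',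
        show (3*(s'-1)+2+1)/3 = s' by omega, show (3*t'+1+2)/3 = t'+1 by omega,
        aR_succ_ge2 q k n (s'+1) (t'+1) (by omega), show s'+1-1 = s' by omega]
      have hB : Bent q u (3*s'+2) (3*t'+1)
          = if s' = t' then -((q:RatFunc ℚ)-1)*u else 0 := by
        unfold Bent
        split_ifs <;> first | rfl | (exfalso; omega)
      rw [hB]
      have hzero : ∀ hcond : (3*t'+1) % 3 = 1,
          True := fun _ => trivial
      by_cases h4 : 4 ≤ 3*t'+1
      · rw [if_pos h4, hD, show 3*t'+1-1 = 3*t' by omega,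
          Nent_row2 q u k (aR q k (n+1)) (show (3*(s'-1)+2)%3 = 2 by omega),
          if_neg (show ¬(3*(s'-1)+2 = 3*t') by omega),
          if_neg (show ¬((3*t')%3 = 1) by omega)]
        by_cases hst : s' = t'
        · rw [if_pos hst, if_pos (show s'+1 = t'+1 by omega)]; ring
        · rw [if_neg hst, if_neg (show ¬(s'+1 = t'+1) by omega)]; ring
      · rw [if_neg h4]
        by_cases hst : s' = t'
        · rw [if_pos hst, if_pos (show s'+1 = t'+1 by omega)]; ring
        · rw [if_neg hst, if_neg (show ¬(s'+1 = t'+1) by omega)]; ring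
  · have hM : Ment q u (aR q k (n+2)) i j = Bent q u i j := by
      unfold Ment; rw [if_neg hij]
    rw [hM]
    by_cases hj : j % 3 = 1
    · have hi' : ¬ i % 3 = 2 := fun h => hij ⟨h, hj⟩
      have hD : ∀ x, DNent q u k (aR q k (n+1)) i x = 0 := by
        intro x; unfold DNent; rw [if_neg (by omega), if_neg (by omega)]
      rw [if_pos hj, hD, hD]
      split_ifs <;> ring
    · rw [if_neg hj]; ring

end BrecAux

namespace BrecAux

lemma Brec_eq (q k : ℕ) (hk : 1 ≤ k) (n : ℕ) :
    ∀ i j : Fin (3*k), Brec q (RatFunc.X : RatFunc ℚ) k n i j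
      = Ment q RatFunc.X (aR q k (n+1)) (i.val+1) (j.val+1) := by
  induction n with
  | zero =>
      intro i j
      have hi := i.isLt
      have hj := j.isLt
      show Bmat q RatFunc.X k i j = _
      unfold Bmat
      exact Bent_eq_Ment_one q k (by omega) (by omega) (by omega) (by omega)
  | succ n ih =>
      intro i j
      have hi := i.isLt
      have hj := j.isLt
      set Mm : Matrix (Fin (3*k)) (Fin (3*k)) (RatFunc ℚ) :=
        Matrix.of (fun i j : Fin (3*k) =>
          Ment q RatFunc.X (aR q k (n+1)) (i.val+1) (j.val+1)) with hMm
      set Nn : Matrix (Fin (3*k)) (Fin (3*k)) (RatFunc ℚ) :=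
        Matrix.of (fun i j : Fin (3*k) =>
          Nent q RatFunc.X k (aR q k (n+1)) (i.val+1) (j.val+1)) with hNn
      have hM : Brec q (RatFunc.X : RatFunc ℚ) k n = Mm := by
        funext i' j'; exact ih i' j'
      have hMN : Mm * Nn = 1 := by
        ext i' j'
        have hi' := i'.isLt
        have hj' := j'.isLt
        rw [Matrix.mul_apply]
        simp only [hMm, hNn, Matrix.of_apply]
        rw [Fin.sum_univ_eq_sum_range
            (fun p => Ment q (RatFunc.X : RatFunc ℚ) (aR q k (n+1)) (i'.val+1) (p+1)
              * Nent q RatFunc.X k (aR q k (n+1)) (p+1) (j'.val+1)) (3*k),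
          MN q RatFunc.X k (aR q k (n+1)) (by omega) (by omega) (by omega) (by omega),
          Matrix.one_apply]
        by_cases hij : i' = j'
        · rw [if_pos (by omega), if_pos hij]
        · rw [if_neg (fun hc : i'.val + 1 = j'.val + 1 => hij (Fin.ext (by omega))),
            if_neg hij]
      have hinv : (Brec q (RatFunc.X : RatFunc ℚ) k n)⁻¹ = Nn := by
        rw [hM]; exact Matrix.inv_eq_right_inv hMN
      have hDN : ∀ r : Fin (3*k),
          (Dmat q (RatFunc.X : RatFunc ℚ) k * Nn) i r
            = DNent q RatFunc.X k (aR q k (n+1)) (i.val+1) (r.val+1) := by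
        intro r
        rw [Matrix.mul_apply]
        simp only [hNn, Matrix.of_apply, Dmat]
        rw [Fin.sum_univ_eq_sum_range
            (fun p => Dent q (RatFunc.X : RatFunc ℚ) (i.val+1) (p+1)
              * Nent q RatFunc.X k (aR q k (n+1)) (p+1) (r.val+1)) (3*k)]
        exact DNsum q RatFunc.X k (aR q k (n+1)) hk (by omega) (by omega) _
      have hDNC : (Dmat q (RatFunc.X : RatFunc ℚ) k * Nn * Cmat q (RatFunc.X : RatFunc ℚ) k) i j
          = if (j.val+1) % 3 = 1 then
              DNent q RatFunc.X k (aR q k (n+1)) (i.val+1) (j.val+1) * (-RatFunc.X)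
                + (if 4 ≤ j.val+1 then
                    DNent q RatFunc.X k (aR q k (n+1)) (i.val+1) (j.val+1-1)
                      * (-((q:RatFunc ℚ)^2-(q:RatFunc ℚ))*RatFunc.X) else 0)
            else 0 := by
        rw [Matrix.mul_apply, Finset.sum_congr rfl (fun r _ => by rw [hDN r])]
        simp only [Cmat]
        rw [Fin.sum_univ_eq_sum_range
            (fun r => DNent q RatFunc.X k (aR q k (n+1)) (i.val+1) (r+1)
              * Cent q (RatFunc.X : RatFunc ℚ) (r+1) (j.val+1)) (3*k)]
        exact DNCsum q RatFunc.X k (aR q k (n+1)) (by omega) (by omega) _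
      have hstep : Brec q (RatFunc.X : RatFunc ℚ) k (n+1) i j
          = Bent q RatFunc.X (i.val+1) (j.val+1)
            - (Dmat q (RatFunc.X : RatFunc ℚ) k * Nn * Cmat q (RatFunc.X : RatFunc ℚ) k) i j := by
        rw [show Brec q (RatFunc.X : RatFunc ℚ) k (n+1)
            = Bmat q RatFunc.X k
              - Dmat q RatFunc.X k * (Brec q RatFunc.X k n)⁻¹ * Cmat q RatFunc.X k
            from rfl, hinv, Matrix.sub_apply]
        rfl
      rw [hstep, hDNC]
      rw [show (j.val+1-1) = j.val from rfl]
      exact step_entry q k n (by omega) (by omega) (by omega) (by omega)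

end BrecAux

/-- For every `ℓ ≥ 1`, the matrix `B_{k,ℓ}(u)` has entry `a_{k,(s,t),ℓ}(u)` at the 1-based
position `(3s−1, 3t−2)` for all `1 ≤ s,t ≤ k`, and all of its other entries coincide with
the corresponding entries of `B_k(u)`. -/
theorem Brec_entries (q k : ℕ) (hq : 2 ≤ q) (hk : 1 ≤ k) (ℓ : ℕ) (hℓ : 1 ≤ ℓ) :
    (∀ (s t : ℕ) (hs1 : 1 ≤ s) (hs2 : s ≤ k) (ht1 : 1 ≤ t) (ht2 : t ≤ k),
      Brec q (RatFunc.X : RatFunc ℚ) k (ℓ - 1)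
          ⟨3 * s - 2, by omega⟩ ⟨3 * t - 3, by omega⟩ =
        algebraMap (Polynomial ℚ) (RatFunc ℚ) (aP q k ℓ s t)) ∧
    (∀ i j : Fin (3 * k), ¬ ((i.val + 1) % 3 = 2 ∧ (j.val + 1) % 3 = 1) →
      Brec q (RatFunc.X : RatFunc ℚ) k (ℓ - 1) i j =
        Bmat q (RatFunc.X : RatFunc ℚ) k i j) := by
  obtain ⟨n, rfl⟩ : ∃ n, ℓ = n + 1 := ⟨ℓ - 1, by omega⟩
  constructor
  · intro s t hs1 hs2 ht1 ht2
    have h := BrecAux.Brec_eq q k hk n ⟨3*s-2, by omega⟩ ⟨3*t-3, by omega⟩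
    rw [show n+1-1 = n by omega, h]
    show BrecAux.Ment q RatFunc.X (BrecAux.aR q k (n+1)) (3*s-2+1) (3*t-3+1) = _
    unfold BrecAux.Ment
    rw [if_pos ⟨by omega, by omega⟩, show (3*s-2+1+1)/3 = s by omega,
      show (3*t-3+1+2)/3 = t by omega]
    rfl
  · intro i j hij
    have h := BrecAux.Brec_eq q k hk n i j
    rw [show n+1-1 = n by omega, h]
    unfold BrecAux.Ment
    rw [if_neg hij]
    rfl
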